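/- Single-swap stability of round-robin price bounds: let S be a multiset of kn₁ good-prices and S' = S with one element j_1 replaced by another element j_2. Let X_{n₁} denote the last agent's bundle under round-robin on S, X'_{n₁} under round-robin on S', and X_1 the first agent's bundle under S. Then p(X'_{n₁}) ≥ p̂(X_1). -/

import Mathlib

open Finset

-- count lower bound: in a sorted (≥) list, at least i+1 elements are ≥ L[i]
lemma auxA (L : List ℝ) (hs : L.Pairwise (· ≥ ·)) (i : ℕ) (hi : i < L.length) :
    i + 1 ≤ L.countP (fun y => decide (L.get ⟨i, hi⟩ ≤ y)) := by
  have hp := (List.pairwise_iff_getElem).1 hs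
  set x := L.get ⟨i, hi⟩ with hx
  have hsplit : L = L.take (i+1) ++ L.drop (i+1) := (List.take_append_drop _ _).symm
  have hcount : L.countP (fun y => decide (x ≤ y)) =
      (L.take (i+1)).countP (fun y => decide (x ≤ y)) +
      (L.drop (i+1)).countP (fun y => decide (x ≤ y)) := by
    conv_lhs => rw [hsplit]
    exact List.countP_append
  have htake : (L.take (i+1)).countP (fun y => decide (x ≤ y)) = i + 1 := by
    rw [List.countP_eq_length.2, List.length_take]
    · omega
    · intro y hy
      obtain ⟨j, hj, rfl⟩ := List.mem_iff_getElem.1 hy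
      have hj' : j < i + 1 := by
        have := List.length_take (i := i+1) (l := L); omega
      rw [List.getElem_take]
      simp only [decide_eq_true_eq]
      rcases lt_or_eq_of_le (Nat.lt_succ_iff.1 hj') with h | h
      · exact hp j i (by omega) hi h
      · subst h; simp [hx, List.get_eq_getElem]
  omega

-- count upper bound / extraction
lemma auxB (L : List ℝ) (hs : L.Pairwise (· ≥ ·)) (x : ℝ) (m : ℕ)
    (h : m + 1 ≤ L.countP (fun y => decide (x ≤ y))) (hm : m < L.length) :
    x ≤ L.get ⟨m, hm⟩ := by
  by_contra hc
  push_neg at hc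
  have hp := (List.pairwise_iff_getElem).1 hs
  have hsplit : L = L.take m ++ L.drop m := (List.take_append_drop _ _).symm
  have hcount : L.countP (fun y => decide (x ≤ y)) =
      (L.take m).countP (fun y => decide (x ≤ y)) +
      (L.drop m).countP (fun y => decide (x ≤ y)) := by
    conv_lhs => rw [hsplit]
    exact List.countP_append
  have hdrop : (L.drop m).countP (fun y => decide (x ≤ y)) = 0 := by
    rw [List.countP_eq_zero]
    intro y hy
    obtain ⟨j, hj, rfl⟩ := List.mem_iff_getElem.1 hy
    rw [List.getElem_drop]
    simp only [decide_eq_true_eq, not_le]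
    have hlen := List.length_drop (i := m) (l := L)
    rcases Nat.eq_zero_or_pos j with h0 | h0
    · subst h0; simpa using hc
    · have := hp m (m + j) hm (by omega) (by omega)
      calc L[m+j] ≤ L[m] := this
        _ < x := by simpa using hc
  have htake : (L.take m).countP (fun y => decide (x ≤ y)) ≤ m := by
    calc (L.take m).countP _ ≤ (L.take m).length := List.countP_le_length
      _ ≤ m := by simp [List.length_take]
  omega

lemma auxKey (S : Multiset ℝ) (hSnn : ∀ x ∈ S, (0:ℝ) ≤ x)
    (j₁ j₂ : ℝ) (hj₁ : j₁ ∈ S) (hj₂ : 0 ≤ j₂)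
    (L L' : List ℝ) (hLsort : L.Pairwise (· ≥ ·)) (hL : (L : Multiset ℝ) = S)
    (hL'sort : L'.Pairwise (· ≥ ·)) (hL' : (L' : Multiset ℝ) = j₂ ::ₘ S.erase j₁)
    (m : ℕ) : L.getD (m+1) 0 ≤ L'.getD m 0 := by
  have hL'nn : ∀ y ∈ L', (0:ℝ) ≤ y := by
    intro y hy
    have : y ∈ (L' : Multiset ℝ) := by exact_mod_cast hy
    rw [hL'] at this
    rcases Multiset.mem_cons.1 this with h | h
    · subst h; exact hj₂
    · exact hSnn y (Multiset.mem_of_mem_erase h)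
  have hlen : L.length = Multiset.card S := by rw [← hL]; rfl
  have hlen' : L'.length = Multiset.card S := by
    have : Multiset.card (L' : Multiset ℝ) = Multiset.card (j₂ ::ₘ S.erase j₁) := by rw [hL']
    simp only [Multiset.coe_card, Multiset.card_cons, Multiset.card_erase_of_mem hj₁, Nat.pred_eq_sub_one] at this
    have hpos : 0 < Multiset.card S := Multiset.card_pos_iff_exists_mem.2 ⟨j₁, hj₁⟩
    omega
  by_cases hm1 : m + 1 < L.length
  · -- main case
    set x := L.get ⟨m+1, hm1⟩ with hx
    have hA := auxA L hLsort (m+1) hm1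
    -- transfer counts to multisets
    have hcS : (m + 2 : ℕ) ≤ Multiset.countP (fun y => x ≤ y) S := by
      rw [← hL, Multiset.coe_countP]
      exact hA
    have hcE : Multiset.countP (fun y => x ≤ y) S ≤
        Multiset.countP (fun y => x ≤ y) (S.erase j₁) + 1 := by
      conv_lhs => rw [← Multiset.cons_erase hj₁]
      rw [Multiset.countP_cons]
      split <;> omega
    have hcS' : (m + 1 : ℕ) ≤ Multiset.countP (fun y => x ≤ y) (j₂ ::ₘ S.erase j₁) := by
      rw [Multiset.countP_cons]
      split <;> omega
    have hcL' : (m + 1 : ℕ) ≤ L'.countP (fun y => decide (x ≤ y)) := by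
      have : Multiset.countP (fun y => x ≤ y) (L' : Multiset ℝ) =
          L'.countP (fun y => decide (x ≤ y)) := by simp
      rw [hL'] at this
      omega
    have hm' : m < L'.length := by omega
    have := auxB L' hL'sort x m hcL' hm'
    rw [List.getD_eq_getElem _ _ hm1, List.getD_eq_getElem _ _ hm']
    exact this
  · rw [List.getD_eq_default _ _ (by omega)]
    by_cases hm' : m < L'.length
    · rw [List.getD_eq_getElem _ _ hm']
      exact hL'nn _ (List.getElem_mem hm')
    · rw [List.getD_eq_default _ _ (by omega)]


/-- Single-swap stability of round-robin price bounds: if `S'` is obtained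
from the multiset of prices `S` (of size `k·n₁`) by replacing one element
`j₁ ∈ S` with `j₂`, and `L`, `L'` are the nonincreasing sorted lists of `S`,
`S'`, then the last agent's bundle price under `S'` is at least
`p̂(X_1) = p(X_1) − max X_1` under `S`. -/
theorem stmt14 (k n₁ : ℕ) (hn₁ : 0 < n₁)
    (S : Multiset ℝ) (hcard : Multiset.card S = k * n₁)
    (hSnn : ∀ x ∈ S, (0:ℝ) ≤ x)
    (j₁ j₂ : ℝ) (hj₁ : j₁ ∈ S) (hj₂ : 0 ≤ j₂)
    (L L' : List ℝ)
    (hLsort : L.Pairwise (· ≥ ·)) (hL : (L : Multiset ℝ) = S)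
    (hL'sort : L'.Pairwise (· ≥ ·)) (hL' : (L' : Multiset ℝ) = j₂ ::ₘ S.erase j₁) :
    ∑ ι ∈ Finset.Ico 1 k, L.getD (ι * n₁ + 0) 0 ≤
      ∑ ι ∈ Finset.range k, L'.getD (ι * n₁ + (n₁ - 1)) 0 := by
  have hL'nn : ∀ n : ℕ, (0:ℝ) ≤ L'.getD n 0 := by
    intro n
    by_cases hn : n < L'.length
    · rw [List.getD_eq_getElem _ _ hn]
      have hy : L'[n] ∈ (L' : Multiset ℝ) := by
        exact_mod_cast List.getElem_mem hn
      rw [hL'] at hy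
      rcases Multiset.mem_cons.1 hy with h | h
      · rw [h]; exact hj₂
      · exact hSnn _ (Multiset.mem_of_mem_erase h)
    · rw [List.getD_eq_default _ _ (by omega)]
  have h1 : ∑ ι ∈ Finset.Ico 1 k, L.getD (ι * n₁ + 0) 0 =
      ∑ i ∈ Finset.range (k - 1), L.getD ((1 + i) * n₁ + 0) 0 :=
    Finset.sum_Ico_eq_sum_range _ _ _
  rw [h1]
  have h2 : ∑ i ∈ Finset.range (k - 1), L.getD ((1 + i) * n₁ + 0) 0 ≤
      ∑ i ∈ Finset.range (k - 1), L'.getD (i * n₁ + (n₁ - 1)) 0 := by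
    apply Finset.sum_le_sum
    intro i _
    have hidx : i * n₁ + (n₁ - 1) + 1 = (1 + i) * n₁ + 0 := by
      rw [add_mul, one_mul]; omega
    rw [← hidx]
    exact auxKey S hSnn j₁ j₂ hj₁ hj₂ L L' hLsort hL hL'sort hL' _
  refine h2.trans ?_
  apply Finset.sum_le_sum_of_subset_of_nonneg
  · exact Finset.range_subset_range.2 (by omega)
  · intro i _ _
    exact hL'nn _
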